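/- Let k ≥ 1, m ≥ 1, (x,y) ∈ ℝ², and (x',y') = F_{km}(x,y). If k is odd, then x' + y' = x + y + (m/(k+1))·x − (m−1)m/6 + ((m−1)/3)·γ̄_{k+2} − (1/3)·Σ_{j=1}^{⌊(m−1)/2⌋} γ̄_{k+2j+1}. If k is even, then x' + y' = x + y + (m/(k+1))·x − (m−1)m/6 − (1/3)·Σ_{j=1}^{⌊m/2⌋} γ̄_{k+2j}. -/

import Mathlib

open Finset

/-- The sequence `γ` with `γ₁ = γ₂ = 1` and `γ_k = ∏_{j=1}^{⌊(k−1)/2⌋} (2j+1)/(2j)`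
for `k ≥ 3` (the empty product is `1`, so the formula is also valid for `k = 1, 2`). -/
noncomputable def gammaSeq (k : ℕ) : ℝ :=
  ∏ j ∈ Finset.Icc 1 ((k - 1) / 2), (2 * (j : ℝ) + 1) / (2 * (j : ℝ))

/-- `γ̄_k = γ_k / k`. -/
noncomputable def gammaBar (k : ℕ) : ℝ := gammaSeq k / k

/-- `δ_k = (1/3)(k + (−1)^k γ_k)`. -/
noncomputable def deltaSeq (k : ℕ) : ℝ := (1 / 3) * ((k : ℝ) + (-1) ^ k * gammaSeq k)

/-- `f_k(x,y) = (y, ((k+2)/(k+1))·x)`. -/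
noncomputable def fmap (k : ℕ) : ℝ × ℝ → ℝ × ℝ :=
  fun xy => (xy.2, ((k : ℝ) + 2) / ((k : ℝ) + 1) * xy.1)

/-- `g_k(x,y) = (x + δ_{k+1}, ((k+2)/(k+1))·(y − δ_{k+1}))`. -/
noncomputable def gmap (k : ℕ) : ℝ × ℝ → ℝ × ℝ :=
  fun xy => (xy.1 + deltaSeq (k + 1), ((k : ℝ) + 2) / ((k : ℝ) + 1) * (xy.2 - deltaSeq (k + 1)))

/-- `G_{k0} = id` and `G_{km} = g_{k+m−1} ∘ g_{k+m−2} ∘ ⋯ ∘ g_k` for `m ≥ 1`. -/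
noncomputable def Gmap (k : ℕ) : ℕ → (ℝ × ℝ → ℝ × ℝ)
  | 0 => id
  | m + 1 => gmap (k + m) ∘ Gmap k m

/-- `F_{km} = G_{k+1,m−1} ∘ f_k` (for `m ≥ 1`). -/
noncomputable def Fmap (k m : ℕ) : ℝ × ℝ → ℝ × ℝ := Gmap (k + 1) (m - 1) ∘ fmap k

/-- The sets `A_k ⊆ ℝ²`: `A₁ = {(0,0)}` and `A_{k+1} = f_k(A_k) ∪ g_k(A_k)` for
`k ≥ 1` (the value at `0` is junk). -/
noncomputable def Aset : ℕ → Set (ℝ × ℝ)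
  | 0 => ∅
  | 1 => {(0, 0)}
  | k + 2 => fmap (k + 1) '' Aset (k + 1) ∪ gmap (k + 1) '' Aset (k + 1)

private lemma key_div (a b c : ℝ) (hc : c ≠ 0) : a * (c / b) / c = a / b := by
  calc a * (c / b) / c = a / b * (c / c) := by ring
  _ = a / b := by rw [div_self hc, mul_one]

lemma gammaBar_succ (n : ℕ) (hn : 2 ≤ n) (he : Even n) : gammaBar (n + 1) = gammaBar n := by
  obtain ⟨t, rfl⟩ : ∃ t, n = 2 * t := by rcases he with ⟨t, rfl⟩; exact ⟨t, by ring⟩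
  obtain ⟨s, rfl⟩ : ∃ s, t = s + 1 := ⟨t - 1, by omega⟩
  have h1 : (2 * (s + 1) + 1 - 1) / 2 = s + 1 := by omega
  have h2 : (2 * (s + 1) - 1) / 2 = s := by omega
  unfold gammaBar gammaSeq
  rw [h1, h2, Finset.prod_Icc_succ_top (by omega : 1 ≤ s + 1)]
  push_cast
  exact key_div _ _ _ (by positivity)

noncomputable def cterm (k i : ℕ) : ℝ := (-1) ^ (k + i + 1) * gammaBar (k + i + 1)

lemma Fmap_one (k : ℕ) (xy : ℝ × ℝ) : Fmap k 1 xy = fmap k xy := rfl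

lemma Fmap_succ (k n : ℕ) (xy : ℝ × ℝ) :
    Fmap k (n + 2) xy = gmap (k + 1 + n) (Fmap k (n + 1) xy) := rfl

lemma delta_div (n : ℕ) (hn : n ≠ 0) :
    deltaSeq n / (n : ℝ) = 1 / 3 + 1 / 3 * ((-1) ^ n * gammaBar n) := by
  have h : (n : ℝ) ≠ 0 := Nat.cast_ne_zero.mpr hn
  unfold deltaSeq gammaBar
  field_simp

lemma snd_formula (k : ℕ) (x y : ℝ) : ∀ n : ℕ,
    (Fmap k (n + 1) (x, y)).2
      = ((k : ℝ) + n + 2) *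
          (x / ((k : ℝ) + 1) - (n : ℝ) / 3 - 1 / 3 * ∑ i ∈ Icc 1 n, cterm k i) := by
  intro n
  induction n with
  | zero =>
    simp [Fmap_one, fmap]
    ring
  | succ n ih =>
    rw [Fmap_succ, gmap]
    have hne : ((k : ℝ) + n + 2) ≠ 0 := by positivity
    have hd : deltaSeq (k + 1 + n + 1) = ((k:ℝ) + n + 2) *
        (1 / 3 + 1 / 3 * ((-1) ^ (k + n + 2) * gammaBar (k + n + 2))) := by
      have := delta_div (k + n + 2) (by omega)
      have e : k + 1 + n + 1 = k + n + 2 := by omega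
      rw [e]
      field_simp at this ⊢
      push_cast at this ⊢
      linarith [this]
    rw [show ((k + 1 + n : ℕ) : ℝ) = (k : ℝ) + 1 + n by push_cast; ring] at *
    simp only [ih, hd]
    rw [Finset.sum_Icc_succ_top (by omega : 1 ≤ n + 1)]
    have hc : cterm k (n + 1) = (-1) ^ (k + n + 2) * gammaBar (k + n + 2) := by
      unfold cterm
      congr 2 <;> omega
    rw [hc]
    push_cast
    field_simp
    ring

lemma sum_formula (k : ℕ) (x y : ℝ) : ∀ n : ℕ,
    (Fmap k (n + 1) (x, y)).1 + (Fmap k (n + 1) (x, y)).2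
      = x + y + ((n : ℝ) + 1) / ((k : ℝ) + 1) * x - (n : ℝ) * ((n : ℝ) + 1) / 6
          - 1 / 3 * ∑ i ∈ Icc 1 n, ((n : ℝ) + 1 - (i : ℝ)) * cterm k i := by
  intro n
  have hk1 : ((k : ℝ) + 1) ≠ 0 := by positivity
  induction n with
  | zero =>
    simp [Fmap_one, fmap]
    field_simp
    ring
  | succ n ih =>
    rw [Fmap_succ, gmap]
    simp only
    have hne : ((k : ℝ) + n + 2) ≠ 0 := by positivity
    have hd : deltaSeq (k + 1 + n + 1) = ((k:ℝ) + n + 2) *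
        (1 / 3 + 1 / 3 * ((-1) ^ (k + n + 2) * gammaBar (k + n + 2))) := by
      have h2 := delta_div (k + n + 2) (by omega)
      have e : k + 1 + n + 1 = k + n + 2 := by omega
      rw [e]
      field_simp at h2 ⊢
      push_cast at h2 ⊢
      linarith [h2]
    have hsnd := snd_formula k x y n
    have hc : cterm k (n + 1) = (-1) ^ (k + n + 2) * gammaBar (k + n + 2) := by
      simp only [cterm, show k + (n + 1) + 1 = k + n + 2 from by omega]
    have hw : ∑ i ∈ Icc 1 (n + 1), ((n : ℝ) + 1 + 1 - (i : ℝ)) * cterm k i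
        = (∑ i ∈ Icc 1 n, ((n : ℝ) + 1 - (i : ℝ)) * cterm k i)
          + (∑ i ∈ Icc 1 n, cterm k i) + cterm k (n + 1) := by
      rw [Finset.sum_Icc_succ_top (by omega : 1 ≤ n + 1)]
      have h3 : ∀ i ∈ Icc 1 n, ((n:ℝ) + 1 + 1 - (i:ℝ)) * cterm k i
          = ((n:ℝ) + 1 - (i:ℝ)) * cterm k i + cterm k i := fun i _ => by ring
      rw [Finset.sum_congr rfl h3, Finset.sum_add_distrib]
      push_cast
      ring
    have hA : (Fmap k (n + 1) (x, y)).1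
        = (x + y + ((n : ℝ) + 1) / ((k : ℝ) + 1) * x - (n : ℝ) * ((n : ℝ) + 1) / 6
          - 1 / 3 * ∑ i ∈ Icc 1 n, ((n : ℝ) + 1 - (i : ℝ)) * cterm k i)
          - (Fmap k (n + 1) (x, y)).2 := by linarith
    rw [hA, hsnd, hd]
    push_cast
    rw [hw, hc]
    field_simp
    ring

lemma hw_gen (k n : ℕ) :
    ∑ i ∈ Icc 1 (n + 1), ((n : ℝ) + 1 + 1 - (i : ℝ)) * cterm k i
      = (∑ i ∈ Icc 1 n, ((n : ℝ) + 1 - (i : ℝ)) * cterm k i)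
        + ∑ i ∈ Icc 1 (n + 1), cterm k i := by
  rw [Finset.sum_Icc_succ_top (by omega : 1 ≤ n + 1),
      Finset.sum_Icc_succ_top (by omega : 1 ≤ n + 1)]
  have h3 : ∀ i ∈ Icc 1 n, ((n:ℝ) + 1 + 1 - (i:ℝ)) * cterm k i
      = ((n:ℝ) + 1 - (i:ℝ)) * cterm k i + cterm k i := fun i _ => by ring
  rw [Finset.sum_congr rfl h3, Finset.sum_add_distrib]
  push_cast
  ring

lemma sumA_odd (k : ℕ) (hhk : 1 ≤ k) (hk : Odd k) : ∀ n : ℕ, 1 ≤ n →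
    ∑ i ∈ Icc 1 n, cterm k i
      = -gammaBar (k + 2) + (if Even n then gammaBar (k + n + 1) else 0) := by
  have hk2 := Nat.odd_iff.mp hk
  intro n
  induction n with
  | zero => omega
  | succ n ih =>
    intro _
    rcases Nat.eq_zero_or_pos n with h0 | hpos
    · subst h0
      simp only [Finset.Icc_self, Finset.sum_singleton, cterm]
      rw [Odd.neg_one_pow (by rw [Nat.odd_iff]; omega : Odd (k + 1 + 1))]
      norm_num
    · rw [Finset.sum_Icc_succ_top (by omega : 1 ≤ n + 1), ih hpos]
      have hc : cterm k (n + 1) = (-1) ^ (k + n) * gammaBar (k + n + 2) := by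
        simp only [cterm, show k + (n + 1) + 1 = k + n + 2 from by omega]
        congr 1
        rw [pow_add]; norm_num
      rw [hc]
      rcases Nat.even_or_odd n with he | ho
      · have he2 := Nat.even_iff.mp he
        have hg : gammaBar (k + n + 2) = gammaBar (k + n + 1) := by
          have := gammaBar_succ (k + n + 1) (by omega)
            (by rw [Nat.even_iff]; omega)
          simpa [show k + n + 1 + 1 = k + n + 2 from by omega] using this
        rw [if_pos he, if_neg (by rw [Nat.even_iff]; omega : ¬ Even (n+1)),
          Odd.neg_one_pow (by rw [Nat.odd_iff]; omega : Odd (k + n)), hg]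
        ring
      · have ho2 := Nat.odd_iff.mp ho
        rw [if_neg (by rw [Nat.even_iff]; omega : ¬ Even n),
          if_pos (by rw [Nat.even_iff]; omega : Even (n+1)),
          Even.neg_one_pow (by rw [Nat.even_iff]; omega : Even (k + n)),
          show k + (n + 1) + 1 = k + n + 2 from by omega]
        ring

lemma sumA_even (k : ℕ) (hhk : 1 ≤ k) (hk : Even k) : ∀ n : ℕ,
    ∑ i ∈ Icc 1 n, cterm k i
      = if Odd n then gammaBar (k + n + 1) else 0 := by
  have hk2 := Nat.even_iff.mp hk
  intro n
  induction n with
  | zero => simp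
  | succ n ih =>
    rw [Finset.sum_Icc_succ_top (by omega : 1 ≤ n + 1), ih]
    have hc : cterm k (n + 1) = (-1) ^ (k + n) * gammaBar (k + n + 2) := by
      simp only [cterm, show k + (n + 1) + 1 = k + n + 2 from by omega]
      congr 1
      rw [pow_add]; norm_num
    rw [hc]
    rcases Nat.even_or_odd n with he | ho
    · have he2 := Nat.even_iff.mp he
      rw [if_neg (by rw [Nat.odd_iff]; omega : ¬ Odd n),
        if_pos (by rw [Nat.odd_iff]; omega : Odd (n+1)),
        Even.neg_one_pow (by rw [Nat.even_iff]; omega : Even (k + n)),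
        show k + (n + 1) + 1 = k + n + 2 from by omega]
      ring
    · have ho2 := Nat.odd_iff.mp ho
      have hg : gammaBar (k + n + 2) = gammaBar (k + n + 1) := by
        have := gammaBar_succ (k + n + 1) (by omega)
          (by rw [Nat.even_iff]; omega)
        simpa [show k + n + 1 + 1 = k + n + 2 from by omega] using this
      rw [if_pos ho, if_neg (by rw [Nat.odd_iff]; omega : ¬ Odd (n+1)),
        Odd.neg_one_pow (by rw [Nat.odd_iff]; omega : Odd (k + n)), hg]
      ring

lemma sumW_odd (k : ℕ) (hhk : 1 ≤ k) (hk : Odd k) : ∀ n : ℕ,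
    ∑ i ∈ Icc 1 n, ((n : ℝ) + 1 - (i : ℝ)) * cterm k i
      = -(n : ℝ) * gammaBar (k + 2) + ∑ j ∈ Icc 1 (n / 2), gammaBar (k + 2 * j + 1) := by
  intro n
  induction n with
  | zero => simp
  | succ n ih =>
    have step : ∑ i ∈ Icc 1 (n + 1), ((n : ℝ) + 1 + 1 - (i : ℝ)) * cterm k i
        = (∑ i ∈ Icc 1 n, ((n : ℝ) + 1 - (i : ℝ)) * cterm k i)
          + ∑ i ∈ Icc 1 (n + 1), cterm k i := hw_gen k n
    push_cast
    rw [step, ih, sumA_odd k hhk hk (n + 1) (by omega)]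
    rcases Nat.even_or_odd n with he | ho
    · have he2 := Nat.even_iff.mp he
      rw [if_neg (by rw [Nat.even_iff]; omega : ¬ Even (n + 1)),
        show (n + 1) / 2 = n / 2 from by omega]
      ring
    · have ho2 := Nat.odd_iff.mp ho
      rw [if_pos (by rw [Nat.even_iff]; omega : Even (n + 1)),
        show (n + 1) / 2 = n / 2 + 1 from by omega,
        Finset.sum_Icc_succ_top (by omega : 1 ≤ n / 2 + 1),
        show k + 2 * (n / 2 + 1) + 1 = k + (n + 1) + 1 from by omega]
      ring

lemma sumW_even (k : ℕ) (hhk : 1 ≤ k) (hk : Even k) : ∀ n : ℕ,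
    ∑ i ∈ Icc 1 n, ((n : ℝ) + 1 - (i : ℝ)) * cterm k i
      = ∑ j ∈ Icc 1 ((n + 1) / 2), gammaBar (k + 2 * j) := by
  intro n
  induction n with
  | zero => simp
  | succ n ih =>
    have step : ∑ i ∈ Icc 1 (n + 1), ((n : ℝ) + 1 + 1 - (i : ℝ)) * cterm k i
        = (∑ i ∈ Icc 1 n, ((n : ℝ) + 1 - (i : ℝ)) * cterm k i)
          + ∑ i ∈ Icc 1 (n + 1), cterm k i := hw_gen k n
    push_cast
    rw [step, ih, sumA_even k hhk hk (n + 1)]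
    rcases Nat.even_or_odd n with he | ho
    · have he2 := Nat.even_iff.mp he
      rw [if_pos (by rw [Nat.odd_iff]; omega : Odd (n + 1)),
        show (n + 1 + 1) / 2 = (n + 1) / 2 + 1 from by omega,
        Finset.sum_Icc_succ_top (by omega : 1 ≤ (n + 1) / 2 + 1),
        show k + 2 * ((n + 1) / 2 + 1) = k + (n + 1) + 1 from by omega]
    · have ho2 := Nat.odd_iff.mp ho
      rw [if_neg (by rw [Nat.odd_iff]; omega : ¬ Odd (n + 1)),
        show (n + 1 + 1) / 2 = (n + 1) / 2 from by omega]
      ring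

/-- Effect of `F_{km}` on the coordinate sum: for `k ≥ 1`, `m ≥ 1`
and `(x',y') = F_{km}(x,y)`: if `k` is odd then
`x' + y' = x + y + (m/(k+1))·x − (m−1)m/6 + ((m−1)/3)·γ̄_{k+2} − (1/3)·Σ_{j=1}^{⌊(m−1)/2⌋} γ̄_{k+2j+1}`,
and if `k` is even then
`x' + y' = x + y + (m/(k+1))·x − (m−1)m/6 − (1/3)·Σ_{j=1}^{⌊m/2⌋} γ̄_{k+2j}`. -/
theorem stmt13 (k : ℕ) (hk : 1 ≤ k) (m : ℕ) (hm : 1 ≤ m) (x y : ℝ) :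
    (Odd k →
      (Fmap k m (x, y)).1 + (Fmap k m (x, y)).2
        = x + y + (m : ℝ) / ((k : ℝ) + 1) * x - ((m : ℝ) - 1) * (m : ℝ) / 6
            + ((m : ℝ) - 1) / 3 * gammaBar (k + 2)
            - (1 / 3) * ∑ j ∈ Finset.Icc 1 ((m - 1) / 2), gammaBar (k + 2 * j + 1)) ∧
    (Even k →
      (Fmap k m (x, y)).1 + (Fmap k m (x, y)).2
        = x + y + (m : ℝ) / ((k : ℝ) + 1) * x - ((m : ℝ) - 1) * (m : ℝ) / 6
            - (1 / 3) * ∑ j ∈ Finset.Icc 1 (m / 2), gammaBar (k + 2 * j)) := by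
  obtain ⟨n, rfl⟩ : ∃ n, m = n + 1 := ⟨m - 1, by omega⟩
  have hs := sum_formula k x y n
  constructor
  · intro hodd
    rw [sumW_odd k hk hodd n] at hs
    rw [hs, show n + 1 - 1 = n from by omega]
    push_cast
    ring
  · intro heven
    rw [sumW_even k hk heven n] at hs
    rw [hs, show (n + 1) / 2 = (n + 1) / 2 from rfl]
    push_cast
    ring
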